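/- The number of alternating sign matrices ∏_{k=0}^{n-1} (3k+1)!/(n+k)! equals the product over pairs 0 ≤ k ≤ n-k-2 of ∏_{d=3k+2}^{n+k} (3n - d)/d. -/

import Mathlib

private lemma fac_ratio (a b : ℕ) (h : a ≤ b) :
    (Nat.factorial b : ℚ) / (Nat.factorial a) = ∏ d ∈ Finset.Icc (a + 1) b, (d : ℚ) := by
  induction b, h using Nat.le_induction with
  | base =>
      rw [show Finset.Icc (a + 1) a = ∅ from Finset.Icc_eq_empty (by omega),
        Finset.prod_empty]
      exact div_self (by exact_mod_cast (Nat.factorial_pos a).ne')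
  | succ b hb ih =>
      rw [Finset.prod_Icc_succ_top (by omega), ← ih, Nat.factorial_succ]
      have h1 : (Nat.factorial a : ℚ) ≠ 0 := by
        exact_mod_cast (Nat.factorial_pos a).ne'
      push_cast
      field_simp

theorem stmt_2 (n : ℕ) :
    ∏ k ∈ Finset.range n, (Nat.factorial (3 * k + 1) : ℚ) / (Nat.factorial (n + k)) =
      ∏ k ∈ (Finset.range n).filter (fun k => 2 * k + 2 ≤ n),
        ∏ d ∈ Finset.Icc (3 * k + 2) (n + k), ((3 * n - d : ℚ) / (d : ℚ)) := by
  have hfacne : ∀ m : ℕ, (Nat.factorial m : ℚ) ≠ 0 := fun m => by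
    exact_mod_cast (Nat.factorial_pos m).ne'
  have hRHS : ∀ k ∈ (Finset.range n).filter (fun k => 2 * k + 2 ≤ n),
      ∏ d ∈ Finset.Icc (3 * k + 2) (n + k), ((3 * n - d : ℚ) / (d : ℚ))
        = (∏ e ∈ Finset.Icc (2 * n - k) (3 * n - 3 * k - 2), (e : ℚ)) *
          ((Nat.factorial (3 * k + 1) : ℚ) / (Nat.factorial (n + k))) := by
    intro k hk
    simp only [Finset.mem_filter, Finset.mem_range] at hk
    obtain ⟨hk1, hk2⟩ := hk
    rw [Finset.prod_div_distrib]
    have h1 : ∏ d ∈ Finset.Icc (3 * k + 2) (n + k), ((3 * n : ℚ) - d)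
        = ∏ e ∈ Finset.Icc (2 * n - k) (3 * n - 3 * k - 2), (e : ℚ) := by
      refine Finset.prod_nbij' (fun d => 3 * n - d) (fun e => 3 * n - e) ?_ ?_ ?_ ?_ ?_ <;>
        intro a ha <;> simp only [Finset.mem_Icc] at ha ⊢
      · omega
      · omega
      · omega
      · omega
      · have hle : a ≤ 3 * n := by omega
        push_cast [Nat.cast_sub hle]
        ring
    have h2 : ∏ d ∈ Finset.Icc (3 * k + 2) (n + k), (d : ℚ)
        = (Nat.factorial (n + k) : ℚ) / (Nat.factorial (3 * k + 1)) := by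
      rw [fac_ratio (3 * k + 1) (n + k) (by omega)]
    rw [h1, h2, div_div_eq_mul_div, mul_div_assoc]
  rw [Finset.prod_congr rfl hRHS, Finset.prod_mul_distrib,
    ← Finset.prod_filter_mul_prod_filter_not (Finset.range n) (fun k => 2 * k + 2 ≤ n)
      (fun k => (Nat.factorial (3 * k + 1) : ℚ) / (Nat.factorial (n + k)))]
  have key : ∏ k ∈ (Finset.range n).filter (fun k => ¬ (2 * k + 2 ≤ n)),
      (Nat.factorial (3 * k + 1) : ℚ) / (Nat.factorial (n + k))
      = ∏ k ∈ (Finset.range n).filter (fun k => 2 * k + 2 ≤ n),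
        ∏ e ∈ Finset.Icc (2 * n - k) (3 * n - 3 * k - 2), (e : ℚ) := by
    have step1 : ∀ k ∈ (Finset.range n).filter (fun k => ¬ (2 * k + 2 ≤ n)),
        (Nat.factorial (3 * k + 1) : ℚ) / (Nat.factorial (n + k))
          = ∏ d ∈ Finset.Icc (n + k + 1) (3 * k + 1), (d : ℚ) := by
      intro k hk
      simp only [Finset.mem_filter, Finset.mem_range] at hk
      exact fac_ratio (n + k) (3 * k + 1) (by omega)
    rw [Finset.prod_congr rfl step1]
    have step2 : ∏ k ∈ (Finset.range n).filter (fun k => ¬ (2 * k + 2 ≤ n)),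
        ∏ d ∈ Finset.Icc (n + k + 1) (3 * k + 1), (d : ℚ)
        = ∏ k ∈ (Finset.range n).filter (fun k => n ≤ 2 * k),
          ∏ d ∈ Finset.Icc (n + k + 1) (3 * k + 1), (d : ℚ) := by
      refine (Finset.prod_subset ?_ ?_).symm
      · intro x hx
        simp only [Finset.mem_filter, Finset.mem_range] at hx ⊢
        omega
      · intro x hx hx'
        simp only [Finset.mem_filter, Finset.mem_range] at hx hx'
        have : Finset.Icc (n + x + 1) (3 * x + 1) = ∅ := by
          rw [Finset.Icc_eq_empty_iff]
          omega
        rw [this, Finset.prod_empty]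
    rw [step2]
    refine (Finset.prod_nbij' (fun k => n - 1 - k) (fun k => n - 1 - k) ?_ ?_ ?_ ?_ ?_).symm <;>
      intro a ha <;>
      simp only [Finset.mem_filter, Finset.mem_range] at ha ⊢
    · omega
    · omega
    · omega
    · omega
    · obtain ⟨ha1, ha2⟩ := ha
      have e1 : n + (n - 1 - a) + 1 = 2 * n - a := by omega
      have e2 : 3 * (n - 1 - a) + 1 = 3 * n - 3 * a - 2 := by omega
      rw [e1, e2]
  rw [key, mul_comm]
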